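/- (Theorem 2.1, pointwise form.) Suppose R is of product type with respect to the orthogonal J-invariant decomposition V = V₁ ⊕ V₂. Then the generalized Bochner curvature tensor of R vanishes, B* = 0, if and only if there exists μ ∈ ℝ such that R(X,JX,JX,X) = μ·g(X,X)² for all X ∈ V₁ and R(X,JX,JX,X) = −μ·g(X,X)² for all X ∈ V₂ (i.e., V₁ has constant holomorphic sectional curvature μ and V₂ has constant holomorphic sectional curvature −μ). -/

import Mathlib

open RealInnerProductSpace
open scoped BigOperators

noncomputable section

/-- A (curried) 4-linear form on `V`. -/
abbrev Tensor4 (V : Type*) [NormedAddCommGroup V] [InnerProductSpace ℝ V] :=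
  V →ₗ[ℝ] V →ₗ[ℝ] V →ₗ[ℝ] V →ₗ[ℝ] ℝ

variable {V : Type*} [NormedAddCommGroup V] [InnerProductSpace ℝ V]

/-- `J` is an orthogonal complex structure: `J ∘ J = -id` and `g(JX, JY) = g(X, Y)`. -/
def OrthJ (J : V →ₗ[ℝ] V) : Prop :=
  (∀ X : V, J (J X) = -X) ∧ (∀ X Y : V, ⟪J X, J Y⟫ = ⟪X, Y⟫)

/-- `R` is a curvature-like tensor. -/
def CurvatureLike (R : Tensor4 V) : Prop :=
  (∀ X Y Z U : V, R X Y Z U = - R Y X Z U) ∧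
  (∀ X Y Z U : V, R X Y Z U = - R X Y U Z) ∧
  (∀ X Y Z U : V, R X Y Z U = R Z U X Y) ∧
  (∀ X Y Z U : V, R X Y Z U + R Y Z X U + R Z X Y U = 0)

/-- `R` is an RK-tensor: `R(X,Y,Z,U) = R(JX,JY,JZ,JU)`. -/
def IsRK (J : V →ₗ[ℝ] V) (R : Tensor4 V) : Prop :=
  ∀ X Y Z U : V, R X Y Z U = R (J X) (J Y) (J Z) (J U)

/-- The tensor `R*` associated to `R` and `J`. -/
def Rstar (J : V →ₗ[ℝ] V) (R : Tensor4 V) (X Y Z U : V) : ℝ :=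
  (3 / 16) * (R X Y Z U + R X Y (J Z) (J U) + R (J X) (J Y) Z U +
      R (J X) (J Y) (J Z) (J U)) +
  (1 / 16) * (R (J X) (J Z) Y U - R (J Y) (J Z) X U + R X Z (J Y) (J U) -
      R Y Z (J X) (J U) + R Y (J Z) (J X) U - R X (J Z) (J Y) U +
      R (J Y) Z X (J U) - R (J X) Z Y (J U))

variable {ι : Type*} [Fintype ι]

/-- The Ricci form `S(X,Y) = Σᵢ R(X,Eᵢ,Eᵢ,Y)`. -/
def ric (b : OrthonormalBasis ι ℝ V) (R : Tensor4 V) (X Y : V) : ℝ :=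
  ∑ i, R X (b i) (b i) Y

/-- `S'(X,Y) = Σᵢ R(X,Eᵢ,JEᵢ,JY)`. -/
def ric' (J : V →ₗ[ℝ] V) (b : OrthonormalBasis ι ℝ V) (R : Tensor4 V) (X Y : V) : ℝ :=
  ∑ i, R X (b i) (J (b i)) (J Y)

/-- `S*(X,Y) = Σᵢ R*(X,Eᵢ,Eᵢ,Y)`. -/
def ricStar (J : V →ₗ[ℝ] V) (b : OrthonormalBasis ι ℝ V) (R : Tensor4 V) (X Y : V) : ℝ :=
  ∑ i, Rstar J R X (b i) (b i) Y

/-- The scalar curvature `τ = Σᵢ S(Eᵢ,Eᵢ)`. -/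
def scal (b : OrthonormalBasis ι ℝ V) (R : Tensor4 V) : ℝ :=
  ∑ i, ric b R (b i) (b i)

/-- `τ' = Σᵢ S'(Eᵢ,Eᵢ)`. -/
def scal' (J : V →ₗ[ℝ] V) (b : OrthonormalBasis ι ℝ V) (R : Tensor4 V) : ℝ :=
  ∑ i, ric' J b R (b i) (b i)

/-- `τ* = Σᵢ S*(Eᵢ,Eᵢ)`. -/
def scalStar (J : V →ₗ[ℝ] V) (b : OrthonormalBasis ι ℝ V) (R : Tensor4 V) : ℝ :=
  ∑ i, ricStar J b R (b i) (b i)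

/-- The operator `φ` applied to a bilinear form `Q`. -/
def phi (Q : V → V → ℝ) (X Y Z U : V) : ℝ :=
  ⟪X, U⟫ * Q Y Z - ⟪X, Z⟫ * Q Y U + ⟪Y, Z⟫ * Q X U - ⟪Y, U⟫ * Q X Z

/-- The operator `ψ` applied to a bilinear form `Q`. -/
def psi (J : V →ₗ[ℝ] V) (Q : V → V → ℝ) (X Y Z U : V) : ℝ :=
  ⟪X, J U⟫ * Q Y (J Z) - ⟪X, J Z⟫ * Q Y (J U) - 2 * ⟪X, J Y⟫ * Q Z (J U) +
  ⟪Y, J Z⟫ * Q X (J U) - ⟪Y, J U⟫ * Q X (J Z) - 2 * ⟪Z, J U⟫ * Q X (J Y)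

/-- `π₁(X,Y,Z,U) = g(X,U)g(Y,Z) − g(X,Z)g(Y,U)`. -/
def pi1 (X Y Z U : V) : ℝ :=
  ⟪X, U⟫ * ⟪Y, Z⟫ - ⟪X, Z⟫ * ⟪Y, U⟫

/-- `π₂(X,Y,Z,U) = g(X,JU)g(Y,JZ) − g(X,JZ)g(Y,JU) − 2g(X,JY)g(Z,JU)`. -/
def pi2 (J : V →ₗ[ℝ] V) (X Y Z U : V) : ℝ :=
  ⟪X, J U⟫ * ⟪Y, J Z⟫ - ⟪X, J Z⟫ * ⟪Y, J U⟫ - 2 * ⟪X, J Y⟫ * ⟪Z, J U⟫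

/-- The generalized Bochner curvature tensor `B*`. -/
def Bstar (m : ℕ) (J : V →ₗ[ℝ] V) (b : OrthonormalBasis ι ℝ V) (R : Tensor4 V)
    (X Y Z U : V) : ℝ :=
  Rstar J R X Y Z U
    - (1 / (2 * ((m : ℝ) + 2))) *
        (phi (ricStar J b R) X Y Z U + psi J (ricStar J b R) X Y Z U)
    + (scalStar J b R / (4 * ((m : ℝ) + 1) * ((m : ℝ) + 2))) *
        (pi1 X Y Z U + pi2 J X Y Z U)

/-- The Bochner curvature tensor `B` of an RK-tensor. -/
def Bochner (m : ℕ) (J : V →ₗ[ℝ] V) (b : OrthonormalBasis ι ℝ V) (R : Tensor4 V)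
    (X Y Z U : V) : ℝ :=
  R X Y Z U
    - (1 / (8 * ((m : ℝ) + 2))) *
        (phi (fun x y => ric b R x y + 3 * ric' J b R x y) X Y Z U +
         psi J (fun x y => ric b R x y + 3 * ric' J b R x y) X Y Z U)
    - (1 / (8 * ((m : ℝ) - 2))) *
        (3 * phi (fun x y => ric b R x y - ric' J b R x y) X Y Z U -
         psi J (fun x y => ric b R x y - ric' J b R x y) X Y Z U)
    + ((scal b R + 3 * scal' J b R) / (16 * ((m : ℝ) + 1) * ((m : ℝ) + 2))) *
        (pi1 X Y Z U + pi2 J X Y Z U)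
    + ((scal b R - scal' J b R) / (16 * ((m : ℝ) - 1) * ((m : ℝ) - 2))) *
        (3 * pi1 X Y Z U - pi2 J X Y Z U)

/-- `R` is of product type with respect to the decomposition `V = V₁ ⊕ V₂`. -/
def ProductType2 {V : Type*} [NormedAddCommGroup V] [InnerProductSpace ℝ V]
    (V₁ V₂ : Submodule ℝ V) (R : Tensor4 V) : Prop :=
  ∀ X Y Z U : V, (X ∈ V₁ ∨ X ∈ V₂) → (Y ∈ V₁ ∨ Y ∈ V₂) →
    (Z ∈ V₁ ∨ Z ∈ V₂) → (U ∈ V₁ ∨ U ∈ V₂) →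
    (X ∈ V₁ ∨ Y ∈ V₁ ∨ Z ∈ V₁ ∨ U ∈ V₁) → (X ∈ V₂ ∨ Y ∈ V₂ ∨ Z ∈ V₂ ∨ U ∈ V₂) →
    R X Y Z U = 0


section AuxPolar

variable {V : Type*} [NormedAddCommGroup V] [InnerProductSpace ℝ V]

theorem polar4 (J : V →ₗ[ℝ] V) (hJJ : ∀ x : V, J (J x) = -x) (T : V → V → V → V → ℝ)
    (tsk1 : ∀ X Y Z U : V, T Y X Z U = -T X Y Z U)
    (tsk2 : ∀ X Y Z U : V, T X Y U Z = -T X Y Z U)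
    (tpair : ∀ X Y Z U : V, T Z U X Y = T X Y Z U)
    (tbia : ∀ X Y Z U : V, T X Y Z U + T Y Z X U + T Z X Y U = 0)
    (tk2 : ∀ X Y Z U : V, T X Y (J Z) (J U) = T X Y Z U)
    (ta1 : ∀ x x' y z u : V, T (x + x') y z u = T x y z u + T x' y z u)
    (ta2 : ∀ x y y' z u : V, T x (y + y') z u = T x y z u + T x y' z u)
    (ta3 : ∀ x y z z' u : V, T x y (z + z') u = T x y z u + T x y z' u)
    (ta4 : ∀ x y z u u' : V, T x y z (u + u') = T x y z u + T x y z u')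
    (ts1 : ∀ (a : ℝ) (x y z u : V), T (a • x) y z u = a * T x y z u)
    (ts2 : ∀ (a : ℝ) (x y z u : V), T x (a • y) z u = a * T x y z u)
    (ts3 : ∀ (a : ℝ) (x y z u : V), T x y (a • z) u = a * T x y z u)
    (ts4 : ∀ (a : ℝ) (x y z u : V), T x y z (a • u) = a * T x y z u)
    (hH : ∀ X : V, T X (J X) (J X) X = 0) :
    ∀ X Y Z U : V, T X Y Z U = 0 := by
  have tneg1 : ∀ x y z u : V, T (-x) y z u = -T x y z u := fun x y z u => by
    simpa [neg_one_smul] using ts1 (-1) x y z u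
  have tneg2 : ∀ x y z u : V, T x (-y) z u = -T x y z u := fun x y z u => by
    simpa [neg_one_smul] using ts2 (-1) x y z u
  have tneg3 : ∀ x y z u : V, T x y (-z) u = -T x y z u := fun x y z u => by
    simpa [neg_one_smul] using ts3 (-1) x y z u
  have tneg4 : ∀ x y z u : V, T x y z (-u) = -T x y z u := fun x y z u => by
    simpa [neg_one_smul] using ts4 (-1) x y z u
  have k1 : ∀ X Y Z U : V, T (J X) (J Y) Z U = T X Y Z U := by
    intro X Y Z U
    linear_combination tk2 Z U X Y + tpair X Y Z U - tpair (J X) (J Y) Z U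
  have K1 : ∀ A B C D : V, T A (J B) C D = T B (J A) C D := by
    intro A B C D
    have e := k1 A (J B) C D
    rw [hJJ, tneg2] at e
    linear_combination -e - tsk1 B (J A) C D
  have K2 : ∀ C D A B : V, T C D A (J B) = T C D B (J A) := by
    intro C D A B
    have e := k1 A (J B) C D
    rw [hJJ, tneg2] at e
    -- e : -T (J A) B C D = T A (J B) C D ; transfer via pair symmetry
    have e2 := tk2 C D A (J B)
    rw [hJJ, tneg4] at e2
    -- e2 : -T C D (J A) B = T C D A (J B)
    linear_combination -e2 - tsk2 C D B (J A)
  -- chain conversion lemmas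
  have hc : ∀ P Q : V, T Q (J P) (J P) P = T P (J P) (J P) Q := by
    intro P Q
    linear_combination (tpair (J P) P Q (J P)) + (tsk1 P (J P) Q (J P)) -
      (tsk2 P (J P) (J P) Q)
  have hd : ∀ P Q : V, T P (J P) (J Q) P = T P (J P) (J P) Q := by
    intro P Q
    linear_combination (tsk2 P (J P) P (J Q)) - (K2 P (J P) P Q) - (tsk2 P (J P) Q (J P))
  -- Step A
  have stepA0 : ∀ X Y : V, T X (J X) (J X) Y + T Y (J Y) (J Y) X = 0 := by
    intro X Y
    have hp : T (X + Y) (J X + J Y) (J X + J Y) (X + Y) =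
        T X (J X) (J X) X + T X (J X) (J X) Y + T X (J X) (J Y) X + T X (J X) (J Y) Y
        + T X (J Y) (J X) X + T X (J Y) (J X) Y + T X (J Y) (J Y) X + T X (J Y) (J Y) Y
        + T Y (J X) (J X) X + T Y (J X) (J X) Y + T Y (J X) (J Y) X + T Y (J X) (J Y) Y
        + T Y (J Y) (J X) X + T Y (J Y) (J X) Y + T Y (J Y) (J Y) X + T Y (J Y) (J Y) Y := by
      simp only [ta1, ta2, ta3, ta4]; ring
    have hm : T (X + -Y) (J X + -J Y) (J X + -J Y) (X + -Y) =
        T X (J X) (J X) X - T X (J X) (J X) Y - T X (J X) (J Y) X + T X (J X) (J Y) Y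
        - T X (J Y) (J X) X + T X (J Y) (J X) Y + T X (J Y) (J Y) X - T X (J Y) (J Y) Y
        - T Y (J X) (J X) X + T Y (J X) (J X) Y + T Y (J X) (J Y) X - T Y (J X) (J Y) Y
        + T Y (J Y) (J X) X - T Y (J Y) (J X) Y - T Y (J Y) (J Y) X + T Y (J Y) (J Y) Y := by
      simp only [ta1, ta2, ta3, ta4, tneg1, tneg2, tneg3, tneg4]; ring
    have h1 := hH (X + Y)
    rw [map_add] at h1
    rw [hp] at h1
    have h2 := hH (X + -Y)
    rw [map_add, map_neg] at h2
    rw [hm] at h2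
    have e2 : T X (J X) (J Y) X = T X (J X) (J X) Y := hd X Y
    have e3 : T X (J Y) (J X) X = T X (J X) (J X) Y := (K1 X Y (J X) X).trans (hc X Y)
    have e4 : T Y (J X) (J X) X = T X (J X) (J X) Y := hc X Y
    have f2 : T Y (J Y) (J X) Y = T Y (J Y) (J Y) X := hd Y X
    have f3 : T Y (J X) (J Y) Y = T Y (J Y) (J Y) X := (K1 Y X (J Y) Y).trans (hc Y X)
    have f4 : T X (J Y) (J Y) Y = T Y (J Y) (J Y) X := hc Y X
    linear_combination (1/8 : ℝ) * h1 - (1/8 : ℝ) * h2 - (1/4 : ℝ) * (e2 + e3 + e4 + f2 + f3 + f4)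
  have SA : ∀ X Y : V, T X (J X) (J X) Y = 0 := by
    intro X Y
    have s0 := stepA0 X Y
    have s2 := stepA0 X ((2:ℝ) • Y)
    rw [map_smul] at s2
    rw [ts4, ts1, ts2, ts3] at s2
    linear_combination (4/3 : ℝ) * s0 - (1/6 : ℝ) * s2
  -- Step B
  have SB : ∀ X Z Y : V, 2 * T Z (J X) (J X) Y + T X (J X) (J Z) Y = 0 := by
    intro X Z Y
    have hp : T (X + Z) (J X + J Z) (J X + J Z) Y =
        T X (J X) (J X) Y + T X (J X) (J Z) Y + T X (J Z) (J X) Y + T X (J Z) (J Z) Y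
        + T Z (J X) (J X) Y + T Z (J X) (J Z) Y + T Z (J Z) (J X) Y + T Z (J Z) (J Z) Y := by
      simp only [ta1, ta2, ta3]; ring
    have hm : T (X + -Z) (J X + -J Z) (J X + -J Z) Y =
        T X (J X) (J X) Y - T X (J X) (J Z) Y - T X (J Z) (J X) Y + T X (J Z) (J Z) Y
        - T Z (J X) (J X) Y + T Z (J X) (J Z) Y + T Z (J Z) (J X) Y - T Z (J Z) (J Z) Y := by
      simp only [ta1, ta2, ta3, tneg1, tneg2, tneg3]; ring
    have h1 := SA (X + Z) Y
    rw [map_add] at h1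
    rw [hp] at h1
    have h2 := SA (X + -Z) Y
    rw [map_add, map_neg] at h2
    rw [hm] at h2
    have z2 := SA Z Y
    have hc1eq : T Z (J X) (J X) Y + T X (J Z) (J X) Y + T X (J X) (J Z) Y = 0 := by
      linear_combination (1/2 : ℝ) * h1 - (1/2 : ℝ) * h2 - z2
    have k := K1 X Z (J X) Y
    linear_combination hc1eq - k
  -- Step C
  have SC : ∀ W X Z Y : V,
      T Z (J W) (J X) Y + T Z (J X) (J W) Y + T W (J X) (J Z) Y = 0 := by
    intro W X Z Y
    have hp : T Z (J X + J W) (J X + J W) Y =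
        T Z (J X) (J X) Y + T Z (J X) (J W) Y + T Z (J W) (J X) Y + T Z (J W) (J W) Y := by
      simp only [ta2, ta3]; ring
    have hq : T (X + W) (J X + J W) (J Z) Y =
        T X (J X) (J Z) Y + T X (J W) (J Z) Y + T W (J X) (J Z) Y + T W (J W) (J Z) Y := by
      simp only [ta1, ta2]; ring
    have a0 := SB (X + W) Z Y
    rw [map_add] at a0
    rw [hp, hq] at a0
    have c3 := K1 X W (J Z) Y
    linear_combination (1/2 : ℝ) * (a0 - SB X Z Y - SB W Z Y - c3)
  -- Bianchi-type identity for J-twisted entries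
  have ii : ∀ A B C U' : V,
      T A (J B) (J C) U' = T A (J C) (J B) U' - T B C A U' := by
    intro A B C U'
    linear_combination tbia A (J B) (J C) U' - k1 B C A U' - tsk1 A (J C) (J B) U'
  have hstar : ∀ W X Z U : V,
      3 * T W (J X) (J Z) U = T X W Z U - 2 * T X Z W U := by
    intro W X Z U
    have c1 := K1 Z W (J X) U
    have c2 := K1 Z X (J W) U
    have i1 := ii W Z X U
    have i2 := ii X Z W U
    have c3 := K1 X W (J Z) U
    have b1 := tbia Z X W U
    have b2 := tbia Z W X U
    have s1 := tsk1 Z W X U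
    have s2 := tsk1 X W Z U
    linear_combination (SC W X Z U) - c1 - c2 - i1 - i2 - c3 + b1 - s1 + 2 * b2 - 2 * s2
  have hF : ∀ X Z W U : V, T X Z W U = 2 * T X W Z U := by
    intro X Z W U
    have h1 := hstar W X Z U
    have h2 := hstar W (J X) (J Z) U
    rw [hJJ, hJJ, tneg2, tneg3, neg_neg] at h2
    have h3 := k1 X Z W U
    have h4 := tsk1 W (J X) (J Z) U
    have h5 := tsk1 X W Z U
    linear_combination (-1/4 : ℝ) * h1 + (3/4 : ℝ) * h2 + (-3/2 : ℝ) * h3 +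
      (3/4 : ℝ) * h4 + (-9/4 : ℝ) * h5
  intro X Y Z U
  linear_combination (-1/3 : ℝ) * hF X Y Z U - (2/3 : ℝ) * hF X Z Y U

end AuxPolar

section KLgenSec

variable {V : Type*} [NormedAddCommGroup V] [InnerProductSpace ℝ V]
variable (J : V →ₗ[ℝ] V)

/-- generalized phi with an arbitrary bilinear form. -/
def cphi (h Q : V → V → ℝ) (X Y Z U : V) : ℝ :=
  h X U * Q Y Z - h X Z * Q Y U + h Y Z * Q X U - h Y U * Q X Z

/-- generalized psi with an arbitrary bilinear form. -/
def cpsi (h Q : V → V → ℝ) (X Y Z U : V) : ℝ :=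
  h X (J U) * Q Y (J Z) - h X (J Z) * Q Y (J U) - 2 * h X (J Y) * Q Z (J U) +
  h Y (J Z) * Q X (J U) - h Y (J U) * Q X (J Z) - 2 * h Z (J U) * Q X (J Y)

variable (h Q : V → V → ℝ)

lemma Fsk1 (hs : ∀ a b : V, h a b = h b a) (hw : ∀ a b : V, h (J a) b = -h a (J b))
    (Qs : ∀ a b : V, Q a b = Q b a) (Qw : ∀ a b : V, Q (J a) b = -Q a (J b)) : ∀ X Y Z U : V, cphi h Q Y X Z U + cpsi J h Q Y X Z U =
    -(cphi h Q X Y Z U + cpsi J h Q X Y Z U) := by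
  intro X Y Z U
  simp only [cphi, cpsi]
  linear_combination ((-2) * (Q Z (J U))) * (hs Y (J X)) + ((-2) * (Q Z (J U))) * (hw X Y) + ((2) * (h X (J Y))) * (Qs Z (J U)) + ((2) * (h X (J Y))) * (Qw U Z) + ((-2) * (Q Y (J X))) * (hs Z (J U)) + ((-2) * (Q Y (J X))) * (hw U Z) + ((2) * (h U (J Z))) * (Qs Y (J X)) + ((2) * (h U (J Z))) * (Qw X Y) + ((-2) * (h X (J Y))) * (Qs Z (J U)) + ((-2) * (h X (J Y))) * (Qw U Z) + ((-2) * (Q X (J Y))) * (hs Z (J U)) + ((-2) * (Q X (J Y))) * (hw U Z)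

lemma Fsk2 (hs : ∀ a b : V, h a b = h b a) (hw : ∀ a b : V, h (J a) b = -h a (J b))
    (Qs : ∀ a b : V, Q a b = Q b a) (Qw : ∀ a b : V, Q (J a) b = -Q a (J b)) : ∀ X Y Z U : V, cphi h Q X Y U Z + cpsi J h Q X Y U Z =
    -(cphi h Q X Y Z U + cpsi J h Q X Y Z U) := by
  intro X Y Z U
  simp only [cphi, cpsi]
  linear_combination ((-2) * (h X (J Y))) * (Qs Z (J U)) + ((-2) * (h X (J Y))) * (Qw U Z) + ((-2) * (Q X (J Y))) * (hs Z (J U)) + ((-2) * (Q X (J Y))) * (hw U Z)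

lemma Fpair (hs : ∀ a b : V, h a b = h b a) (hw : ∀ a b : V, h (J a) b = -h a (J b))
    (Qs : ∀ a b : V, Q a b = Q b a) (Qw : ∀ a b : V, Q (J a) b = -Q a (J b)) : ∀ X Y Z U : V, cphi h Q Z U X Y + cpsi J h Q Z U X Y =
    cphi h Q X Y Z U + cpsi J h Q X Y Z U := by
  intro X Y Z U
  simp only [cphi, cpsi]
  linear_combination ((1) * (Q U X)) * (hs Z Y) + ((-1) * (Q U Y)) * (hs Z X) + ((1) * (h U X)) * (Qs Z Y) + ((-1) * (h U Y)) * (Qs Z X) + ((1) * (Q U (J X))) * (hs Z (J Y)) + ((1) * (Q U (J X))) * (hw Y Z) + ((-1) * (Q U (J Y))) * (hs Z (J X)) + ((-1) * (Q U (J Y))) * (hw X Z) + ((1) * (h U (J X))) * (Qs Z (J Y)) + ((1) * (h U (J X))) * (Qw Y Z) + ((-1) * (h U (J Y))) * (Qs Z (J X)) + ((-1) * (h U (J Y))) * (Qw X Z) + ((-1) * (Q Y Z)) * (hs X U) + ((1) * (h X Z)) * (Qs Y U) + ((-1) * (h Y Z)) * (Qs X U) + ((1) * (Q X Z)) * (hs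 Y U) + ((-1) * (Q Y (J Z))) * (hs X (J U)) + ((-1) * (Q Y (J Z))) * (hw U X) + ((1) * (h X (J Z))) * (Qs Y (J U)) + ((1) * (h X (J Z))) * (Qw U Y) + ((-1) * (h Y (J Z))) * (Qs X (J U)) + ((-1) * (h Y (J Z))) * (Qw U X) + ((1) * (Q X (J Z))) * (hs Y (J U)) + ((1) * (Q X (J Z))) * (hw U Y)

lemma Fbia (hs : ∀ a b : V, h a b = h b a) (hw : ∀ a b : V, h (J a) b = -h a (J b))
    (Qs : ∀ a b : V, Q a b = Q b a) (Qw : ∀ a b : V, Q (J a) b = -Q a (J b)) : ∀ X Y Z U : V,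
    (cphi h Q X Y Z U + cpsi J h Q X Y Z U) + (cphi h Q Y Z X U + cpsi J h Q Y Z X U) +
      (cphi h Q Z X Y U + cpsi J h Q Z X Y U) = 0 := by
  intro X Y Z U
  simp only [cphi, cpsi]
  linear_combination ((1) * (Q Y Z)) * (hs X U) + ((-1) * (h X Z)) * (Qs Y U) + ((1) * (h Y Z)) * (Qs X U) + ((-1) * (Q X Z)) * (hs Y U) + ((-1) * (Q Y (J Z))) * (hs X (J U)) + ((-1) * (Q Y (J Z))) * (hw U X) + ((-1) * (h X (J Z))) * (Qs Y (J U)) + ((-1) * (h X (J Z))) * (Qw U Y) + ((-1) * (h X (J Y))) * (Qs Z (J U)) + ((-1) * (h X (J Y))) * (Qw U Z) + ((-1) * (h Y (J Z))) * (Qs X (J U)) + ((-1) * (h Y (J Z))) * (Qw U X) + ((-1) * (Q X (J Z))) * (hs Y (J U)) + ((-1) * (Q X (J Z))) * (hw U Y) + ((-1) * (Q X (J Y))) * (hs Z (J U)) + ((-1) * (Q X (J Y))) * (hw U Z) + ((1) * (Q Z X)) * (hs Y U) + ((1) * (h U Y)) * (Qs Z X) + ((-1) * (Q Z U)) * (hs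 Y X) + ((-1) * (h X Y)) * (Qs Z U) + ((1) * (Q Y U)) * (hs Z X) + ((1) * (h X Z)) * (Qs Y U) + ((-1) * (Q Y X)) * (hs Z U) + ((-1) * (h U Z)) * (Qs Y X) + ((-1) * (Q Z (J X))) * (hs Y (J U)) + ((-1) * (Q Z (J X))) * (hw U Y) + ((1) * (h U (J Y))) * (Qs Z (J X)) + ((1) * (h U (J Y))) * (Qw X Z) + ((-1) * (Q Z (J U))) * (hs Y (J X)) + ((-1) * (Q Z (J U))) * (hw X Y) + ((1) * (h X (J Y))) * (Qs Z (J U)) + ((1) * (h X (J Y))) * (Qw U Z) + ((-1) * (Q Y (J U))) * (hs Z (J X)) + ((-1) * (Q Y (J U))) * (hw X Z) + ((1) * (h X (J Z))) * (Qs Y (J U)) + ((1) * (h X (J Z))) * (Qw U Y) + ((-1) * (Q Y (J X))) * (hs Z (J U)) + ((-1) * (Q Y (J X))) * (hw U Z) + ((1) * (h U (J Z))) * (Qs Y (J X)) + ((1) * (h U (J Z))) * (Qw X Y) + ((1) * (Q X Y)) * (hs Z U) + ((-1) * (Q X U)) * (hs Z Y) + ((-1) * (h Y Z)) * (Qs X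 U) + ((1) * (h X Y)) * (Qs Z U) + ((-1) * (Q Z Y)) * (hs X U) + ((-1) * (h U X)) * (Qs Z Y) + ((-1) * (Q X (J U))) * (hs Z (J Y)) + ((-1) * (Q X (J U))) * (hw Y Z) + ((1) * (h Y (J Z))) * (Qs X (J U)) + ((1) * (h Y (J Z))) * (Qw U X) + ((-1) * (Q Z (J Y))) * (hs X (J U)) + ((-1) * (Q Z (J Y))) * (hw U X) + ((1) * (h U (J X))) * (Qs Z (J Y)) + ((1) * (h U (J X))) * (Qw Y Z)

lemma Fk2 (hs : ∀ a b : V, h a b = h b a) (hw : ∀ a b : V, h (J a) b = -h a (J b))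
    (Qs : ∀ a b : V, Q a b = Q b a) (Qw : ∀ a b : V, Q (J a) b = -Q a (J b)) (hJJ : ∀ x : V, J (J x) = -x)
    (hn2 : ∀ a b : V, h a (-b) = -h a b) (Qn2 : ∀ a b : V, Q a (-b) = -Q a b) :
    ∀ X Y Z U : V, cphi h Q X Y (J Z) (J U) + cpsi J h Q X Y (J Z) (J U) =
      cphi h Q X Y Z U + cpsi J h Q X Y Z U := by
  intro X Y Z U
  simp only [cphi, cpsi, hJJ, hn2, Qn2]
  linear_combination ((2) * (h X (J Y))) * (Qs (J Z) U) + ((2) * (Q X (J Y))) * (hs (J Z) U) + ((2) * (h X (J Y))) * (Qs Z (J U)) + ((2) * (h X (J Y))) * (Qw U Z) + ((2) * (Q X (J Y))) * (hs Z (J U)) + ((2) * (Q X (J Y))) * (hw U Z)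

lemma FHolo (hJJ : ∀ x : V, J (J x) = -x)
    (hn2 : ∀ a b : V, h a (-b) = -h a b) (hh : ∀ a b : V, h (J a) (J b) = h a b)
    (hx0 : ∀ x : V, h x (J x) = 0) (hx0' : ∀ x : V, h (J x) x = 0)
    (Qn2 : ∀ a b : V, Q a (-b) = -Q a b) :
    ∀ X : V, cphi h Q X (J X) (J X) X + cpsi J h Q X (J X) (J X) X =
      4 * h X X * (Q X X + Q (J X) (J X)) := by
  intro X
  simp only [cphi, cpsi, hJJ, hn2, Qn2, hx0, hx0', hh]
  ring

end KLgenSec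

section RstarSec
set_option maxHeartbeats 3200000

variable {V : Type*} [NormedAddCommGroup V] [InnerProductSpace ℝ V]
variable (J : V →ₗ[ℝ] V) (R : Tensor4 V)

lemma Rsk1 (hsk1 : ∀ X Y Z U : V, R X Y Z U = -R Y X Z U)
    (hsk2 : ∀ X Y Z U : V, R X Y Z U = -R X Y U Z)
    (hpair : ∀ X Y Z U : V, R X Y Z U = R Z U X Y)
    (hbia : ∀ X Y Z U : V, R X Y Z U + R Y Z X U + R Z X Y U = 0) : ∀ X Y Z U : V, Rstar J R Y X Z U = -Rstar J R X Y Z U := by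
  intro X Y Z U
  simp only [Rstar]
  linear_combination (3/16) * (hsk1 Y X Z U) + (3/16) * (hsk1 Y X (J Z) (J U)) + (3/16) * (hsk1 (J Y) (J X) Z U) + (3/16) * (hsk1 (J Y) (J X) (J Z) (J U))

lemma Rsk2 (hsk1 : ∀ X Y Z U : V, R X Y Z U = -R Y X Z U)
    (hsk2 : ∀ X Y Z U : V, R X Y Z U = -R X Y U Z)
    (hpair : ∀ X Y Z U : V, R X Y Z U = R Z U X Y)
    (hbia : ∀ X Y Z U : V, R X Y Z U + R Y Z X U + R Z X Y U = 0) : ∀ X Y Z U : V, Rstar J R X Y U Z = -Rstar J R X Y Z U := by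
  intro X Y Z U
  simp only [Rstar]
  linear_combination (1/16) * (hsk1 (J X) (J U) Y Z) + (-1/16) * (hsk1 (J Y) (J U) X Z) + (1/16) * (hsk1 X U (J Y) (J Z)) + (-1/16) * (hsk1 Y U (J X) (J Z)) + (1/16) * (hsk1 Y (J U) (J X) Z) + (-1/16) * (hsk1 X (J U) (J Y) Z) + (1/16) * (hsk1 (J Y) U X (J Z)) + (-1/16) * (hsk1 (J X) U Y (J Z)) + (3/16) * (hsk2 X Y Z U) + (3/16) * (hsk2 X Y (J Z) (J U)) + (3/16) * (hsk2 (J X) (J Y) Z U) + (3/16) * (hsk2 (J X) (J Y) (J Z) (J U)) + (1/16) * (hsk2 (J X) (J Z) Y U) + (-1/16) * (hpair (J X) (J Z) U Y) + (-1/16) * (hsk2 (J Y) (J Z) X U) + (1/16) * (hpair (J Y) (J Z) U X) + (1/16) * (hsk2 X Z (J Y) (J U)) + (-1/16) * (hpair X Z (J U) (J Y)) + (-1/16) * (hsk2 Y Z (J X) (J U)) + (1/16) * (hpair Y Z (J U) (J X)) + (1/16) * (hsk2 Y (J Z) (J X) U) + (-1/16) * (hpair Y (J Z) U (J X)) + (-1/16)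 * (hsk2 X (J Z) (J Y) U) + (1/16) * (hpair X (J Z) U (J Y)) + (1/16) * (hsk2 (J Y) Z X (J U)) + (-1/16) * (hpair (J Y) Z (J U) X) + (-1/16) * (hsk2 (J X) Z Y (J U)) + (1/16) * (hpair (J X) Z (J U) Y)

lemma Rpair (hsk1 : ∀ X Y Z U : V, R X Y Z U = -R Y X Z U)
    (hsk2 : ∀ X Y Z U : V, R X Y Z U = -R X Y U Z)
    (hpair : ∀ X Y Z U : V, R X Y Z U = R Z U X Y)
    (hbia : ∀ X Y Z U : V, R X Y Z U + R Y Z X U + R Z X Y U = 0) : ∀ X Y Z U : V, Rstar J R Z U X Y = Rstar J R X Y Z U := by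
  intro X Y Z U
  simp only [Rstar]
  linear_combination (3/16) * (hsk1 Z U X Y) + (3/16) * (hsk1 Z U (J X) (J Y)) + (3/16) * (hsk1 (J Z) (J U) X Y) + (3/16) * (hsk1 (J Z) (J U) (J X) (J Y)) + (1/16) * (hsk1 (J Z) (J X) U Y) + (-1/16) * (hsk2 (J U) (J X) Z Y) + (1/16) * (hsk1 Z X (J U) (J Y)) + (-1/16) * (hsk2 U X (J Z) (J Y)) + (1/16) * (hsk2 U (J X) (J Z) Y) + (-1/16) * (hsk1 Z (J X) (J U) Y) + (1/16) * (hsk2 (J U) X Z (J Y)) + (-1/16) * (hsk1 (J Z) X U (J Y)) + (-3/16) * (hsk2 X Y Z U) + (3/16) * (hpair X Y U Z) + (-3/16) * (hsk2 X Y (J Z) (J U)) + (3/16) * (hpair X Y (J U) (J Z)) + (-3/16) * (hsk2 (J X) (J Y) Z U) + (3/16) * (hpair (J X) (J Y) U Z) + (-3/16) * (hsk2 (J X) (J Y) (J Z) (J U)) + (3/16) * (hpair (J X) (J Y) (J U) (J Z)) + (-1/16) * (hsk2 (J X) (J Z) Y U) + (1/16) * (hsk2 (J Y) (J Z) X U)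 + (-1/16) * (hpair (J Y) (J Z) U X) + (-1/16) * (hsk2 X Z (J Y) (J U)) + (1/16) * (hsk2 Y Z (J X) (J U)) + (-1/16) * (hpair Y Z (J U) (J X)) + (-1/16) * (hsk2 Y (J Z) (J X) U) + (1/16) * (hpair Y (J Z) U (J X)) + (1/16) * (hsk2 X (J Z) (J Y) U) + (-1/16) * (hsk2 (J Y) Z X (J U)) + (1/16) * (hpair (J Y) Z (J U) X) + (1/16) * (hsk2 (J X) Z Y (J U))

lemma Rbia (hsk1 : ∀ X Y Z U : V, R X Y Z U = -R Y X Z U)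
    (hsk2 : ∀ X Y Z U : V, R X Y Z U = -R X Y U Z)
    (hpair : ∀ X Y Z U : V, R X Y Z U = R Z U X Y)
    (hbia : ∀ X Y Z U : V, R X Y Z U + R Y Z X U + R Z X Y U = 0) : ∀ X Y Z U : V,
    Rstar J R X Y Z U + Rstar J R Y Z X U + Rstar J R Z X Y U = 0 := by
  intro X Y Z U
  simp only [Rstar]
  linear_combination (3/16) * (hsk2 X Y Z U) + (1/16) * (hsk2 X Y (J Z) (J U)) + (1/16) * (hsk2 (J X) (J Y) Z U) + (3/16) * (hsk2 (J X) (J Y) (J Z) (J U)) + (-1/16) * (hsk2 (J X) (J Z) Y U) + (1/16) * (hpair (J X) (J Z) U Y) + (1/16) * (hsk2 (J Y) (J Z) X U) + (-1/16) * (hpair (J Y) (J Z) U X) + (-1/16) * (hsk2 X Z (J Y) (J U)) + (1/16) * (hpair X Z (J U) (J Y)) + (1/16) * (hsk2 Y Z (J X) (J U)) + (-1/16) * (hpair Y Z (J U) (J X)) + (1/16) * (hsk2 Y (J Z) (J X) U) + (-1/16) * (hpair Y (J Z) U (J X)) + (-1/16) * (hsk2 X (J Z) (J Y) U) + (1/16)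 * (hpair X (J Z) U (J Y)) + (1/16) * (hsk2 (J Y) Z X (J U)) + (-1/16) * (hpair (J Y) Z (J U) X) + (-1/16) * (hsk2 (J X) Z Y (J U)) + (1/16) * (hpair (J X) Z (J U) Y) + (3/16) * (hsk2 Y Z X U) + (-3/16) * (hpair Y Z U X) + (3/16) * (hsk2 (J Y) (J Z) (J X) (J U)) + (-3/16) * (hpair (J Y) (J Z) (J U) (J X)) + (1/16) * (hsk1 (J Y) (J X) Z U) + (1/8) * (hsk1 (J Z) (J X) Y U) + (1/16) * (hsk1 Y X (J Z) (J U)) + (1/8) * (hsk1 Z X (J Y) (J U)) + (1/16) * (hsk1 Z (J X) (J Y) U) + (-1/16) * (hsk2 (J X) Z (J Y) U) + (1/16) * (hpair (J X) Z U (J Y)) + (-1/16) * (hsk1 Y (J X) (J Z) U) + (1/16) * (hsk2 (J X) Y (J Z) U) + (1/16) * (hsk1 (J Z) X Y (J U)) + (-1/16) * (hsk2 X (J Z) Y (J U)) + (1/16) * (hpair X (J Z) (J U) Y) + (-1/16) * (hsk1 (J Y) X Z (J U)) + (1/16) * (hsk2 X (J Y) Z (J U)) + (3/16) * (hsk1 Z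 X Y U) + (-3/16) * (hsk2 X Z Y U) + (3/16) * (hpair X Z U Y) + (3/16) * (hsk1 (J Z) (J X) (J Y) (J U)) + (-3/16) * (hsk2 (J X) (J Z) (J Y) (J U)) + (3/16) * (hpair (J X) (J Z) (J U) (J Y)) + (1/16) * (hsk1 (J Z) (J Y) X U) + (1/16) * (hsk1 Z Y (J X) (J U)) + (1/16) * (hsk2 X (J Y) (J Z) U) + (-1/16) * (hsk1 Z (J Y) (J X) U) + (1/16) * (hsk2 (J Y) Z (J X) U) + (-1/16) * (hpair (J Y) Z U (J X)) + (1/16) * (hsk2 (J X) Y Z (J U)) + (-1/16) * (hsk1 (J Z) Y X (J U)) + (1/16) * (hsk2 Y (J Z) X (J U)) + (-1/16) * (hpair Y (J Z) (J U) X) + (-3/16) * (hbia U X Y Z) + (3/16) * (hsk1 Y U X Z) + (-1/16) * (hbia U X (J Y) (J Z)) + (1/16) * (hsk1 (J Y) U X (J Z)) + (-1/16) * (hbia U (J X) Y (J Z)) + (1/16) * (hsk1 Y U (J X) (J Z)) + (-1/16) * (hbia U (J X) (J Y) Z) + (1/16) * (hsk1 (J Y) U (J X) Z) + (-1/16) *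 (hbia (J U) X Y (J Z)) + (1/16) * (hsk1 Y (J U) X (J Z)) + (-1/16) * (hbia (J U) X (J Y) Z) + (1/16) * (hsk1 (J Y) (J U) X Z) + (-1/16) * (hbia (J U) (J X) Y Z) + (1/16) * (hsk1 Y (J U) (J X) Z) + (-3/16) * (hbia (J U) (J X) (J Y) (J Z)) + (3/16) * (hsk1 (J Y) (J U) (J X) (J Z))

lemma Rk2 (hJJ : ∀ x : V, J (J x) = -x) :
    ∀ X Y Z U : V, Rstar J R X Y (J Z) (J U) = Rstar J R X Y Z U := by
  intro X Y Z U
  simp only [Rstar, hJJ, map_neg, LinearMap.neg_apply]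
  ring

lemma RS6 (hsk1 : ∀ X Y Z U : V, R X Y Z U = -R Y X Z U)
    (hsk2 : ∀ X Y Z U : V, R X Y Z U = -R X Y U Z)
    (hpair : ∀ X Y Z U : V, R X Y Z U = R Z U X Y)
    (hbia : ∀ X Y Z U : V, R X Y Z U + R Y Z X U + R Z X Y U = 0) (hJJ : ∀ x : V, J (J x) = -x) :
    ∀ X : V, Rstar J R X (J X) (J X) X = R X (J X) (J X) X := by
  intro X
  have hn : ∀ Y Z U : V, R (-X) Y Z U = -R X Y Z U := by
    intro Y Z U; rw [← neg_one_smul ℝ X, map_smul]; simp only [LinearMap.smul_apply, smul_eq_mul]; ring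
  simp only [Rstar, hJJ, map_neg, LinearMap.neg_apply, hn]
  linear_combination (-1/2) * (hsk2 X (J X) (J X) X) + (-5/16) * (hsk1 (J X) X (J X) X) + (3/16) * (hsk1 (J X) X X (J X)) + (-1/24) * (hbia X X X X) + (-1/24) * (hbia (J X) (J X) (J X) (J X))

lemma Ra1 : ∀ x x' y z u : V, Rstar J R (x + x') y z u = Rstar J R x y z u + Rstar J R x' y z u := by
  intro x x' y z u; simp only [Rstar, map_add, LinearMap.add_apply]; ring

lemma Ra2 : ∀ x y y' z u : V, Rstar J R x (y + y') z u = Rstar J R x y z u + Rstar J R x y' z u := by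
  intro x y y' z u; simp only [Rstar, map_add, LinearMap.add_apply]; ring

lemma Ra3 : ∀ x y z z' u : V, Rstar J R x y (z + z') u = Rstar J R x y z u + Rstar J R x y z' u := by
  intro x y z z' u; simp only [Rstar, map_add, LinearMap.add_apply]; ring

lemma Ra4 : ∀ x y z u u' : V, Rstar J R x y z (u + u') = Rstar J R x y z u + Rstar J R x y z u' := by
  intro x y z u u'; simp only [Rstar, map_add, LinearMap.add_apply]; ring

lemma Rs1 : ∀ (a : ℝ) (x y z u : V), Rstar J R (a • x) y z u = a * Rstar J R x y z u := by
  intro a x y z u; simp only [Rstar, map_smul, LinearMap.smul_apply, smul_eq_mul]; ring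

lemma Rs2 : ∀ (a : ℝ) (x y z u : V), Rstar J R x (a • y) z u = a * Rstar J R x y z u := by
  intro a x y z u; simp only [Rstar, map_smul, LinearMap.smul_apply, smul_eq_mul]; ring

lemma Rs3 : ∀ (a : ℝ) (x y z u : V), Rstar J R x y (a • z) u = a * Rstar J R x y z u := by
  intro a x y z u; simp only [Rstar, map_smul, LinearMap.smul_apply, smul_eq_mul]; ring

lemma Rs4 : ∀ (a : ℝ) (x y z u : V), Rstar J R x y z (a • u) = a * Rstar J R x y z u := by
  intro a x y z u; simp only [Rstar, map_smul, LinearMap.smul_apply, smul_eq_mul]; ring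

end RstarSec

set_option maxHeartbeats 1600000 in
/-- Theorem 2.1, pointwise form. -/
theorem Bstar_eq_zero_iff_product {V : Type*} [NormedAddCommGroup V]
    [InnerProductSpace ℝ V] [FiniteDimensional ℝ V] {m k : ℕ}
    (hm : 1 ≤ m) (hdim : Module.finrank ℝ V = 2 * m)
    (J : V →ₗ[ℝ] V) (hJ : OrthJ J) (R : Tensor4 V) (hR : CurvatureLike R)
    (b : OrthonormalBasis (Fin (2 * m)) ℝ V)
    (V₁ V₂ : Submodule ℝ V)
    (horth : ∀ x ∈ V₁, ∀ y ∈ V₂, ⟪x, y⟫ = (0 : ℝ))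
    (hsup : V₁ ⊔ V₂ = ⊤)
    (hJ1 : ∀ x ∈ V₁, J x ∈ V₁) (hJ2 : ∀ x ∈ V₂, J x ∈ V₂)
    (hk1 : 1 ≤ k) (hk2 : k < m)
    (hd1 : Module.finrank ℝ V₁ = 2 * k) (hd2 : Module.finrank ℝ V₂ = 2 * (m - k))
    (hprod : ProductType2 V₁ V₂ R) :
    (∀ X Y Z U : V, Bstar m J b R X Y Z U = 0) ↔
      ∃ μ : ℝ, (∀ X ∈ V₁, R X (J X) (J X) X = μ * ⟪X, X⟫ ^ 2) ∧
        (∀ X ∈ V₂, R X (J X) (J X) X = -μ * ⟪X, X⟫ ^ 2) := by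
  obtain ⟨hJJ, hJi⟩ := hJ
  obtain ⟨hsk1, hsk2, hpair, hbia⟩ := hR
  -- basic inner product / J facts
  have hJw : ∀ a c : V, ⟪J a, c⟫ = -⟪a, J c⟫ := by
    intro a c
    have h0 := hJi a (J c)
    rw [hJJ, inner_neg_right] at h0
    linarith
  have hxJ : ∀ x : V, ⟪x, J x⟫ = 0 := by
    intro x
    have h1 := hJw x x
    have h2 := real_inner_comm (J x) x
    linarith
  have hJx : ∀ x : V, ⟪J x, x⟫ = 0 := by
    intro x; rw [real_inner_comm]; exact hxJ x
  set gf : V → V → ℝ := fun a c => ⟪a, c⟫ with hgf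
  have gfs : ∀ a c : V, gf a c = gf c a := fun a c => real_inner_comm c a
  have gfw : ∀ a c : V, gf (J a) c = -gf a (J c) := hJw
  have gfn2 : ∀ a c : V, gf a (-c) = -gf a c := fun a c => inner_neg_right a c
  have gfh : ∀ a c : V, gf (J a) (J c) = gf a c := hJi
  have gfx0 : ∀ x : V, gf x (J x) = 0 := hxJ
  have gfx0' : ∀ x : V, gf (J x) x = 0 := hJx
  have hm1 : ((m : ℝ) + 1) ≠ 0 := by positivity
  have hm2 : ((m : ℝ) + 2) ≠ 0 := by positivity
  -- the denominator-free bridge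
  have hbridge : ∀ X Y Z U : V, Bstar m J b R X Y Z U =
      (4 * ((m : ℝ) + 1) * ((m : ℝ) + 2) * Rstar J R X Y Z U
        - 2 * ((m : ℝ) + 1) *
            (cphi gf (ricStar J b R) X Y Z U + cpsi J gf (ricStar J b R) X Y Z U)
        + scalStar J b R *
            ((1/2) * (cphi gf gf X Y Z U + cpsi J gf gf X Y Z U))) /
      (4 * ((m : ℝ) + 1) * ((m : ℝ) + 2)) := by
    intro X Y Z U
    simp only [Bstar, phi, psi, pi1, pi2, cphi, cpsi, hgf]
    field_simp
    ring
  have hden : (4 * ((m : ℝ) + 1) * ((m : ℝ) + 2)) ≠ 0 := by positivity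
  -- neg-linearity of ricStar in the second slot
  have hQrn2 : ∀ a c : V, ricStar J b R a (-c) = -ricStar J b R a c := by
    intro a c
    simp only [ricStar]
    rw [← Finset.sum_neg_distrib]
    refine Finset.sum_congr rfl fun i _ => ?_
    simp only [Rstar, map_neg, LinearMap.neg_apply]
    ring
  constructor
  · -- forward direction
    intro hB
    have hz : ∀ X Y Z U : V,
        4 * ((m : ℝ) + 1) * ((m : ℝ) + 2) * Rstar J R X Y Z U
          - 2 * ((m : ℝ) + 1) *
              (cphi gf (ricStar J b R) X Y Z U + cpsi J gf (ricStar J b R) X Y Z U)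
          + scalStar J b R *
              ((1/2) * (cphi gf gf X Y Z U + cpsi J gf gf X Y Z U)) = 0 := by
      intro X Y Z U
      have h0 := hB X Y Z U
      rw [hbridge] at h0
      exact (div_eq_zero_iff.mp h0).resolve_right hden
    -- nonzero vectors in V₁ and V₂
    have hV1pos : 0 < Module.finrank ℝ V₁ := by rw [hd1]; omega
    have hV2pos : 0 < Module.finrank ℝ V₂ := by rw [hd2]; omega
    have hx0ex : ∃ v ∈ V₁, v ≠ 0 := by
      have : Nontrivial V₁ := Module.finrank_pos_iff.mp hV1pos
      obtain ⟨⟨v, hv⟩, hvne⟩ := exists_ne (0 : V₁)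
      exact ⟨v, hv, by simpa [Submodule.mk_eq_zero] using hvne⟩
    have hy0ex : ∃ v ∈ V₂, v ≠ 0 := by
      have : Nontrivial V₂ := Module.finrank_pos_iff.mp hV2pos
      obtain ⟨⟨v, hv⟩, hvne⟩ := exists_ne (0 : V₂)
      exact ⟨v, hv, by simpa [Submodule.mk_eq_zero] using hvne⟩
    obtain ⟨x0, hx0m, hx0ne⟩ := hx0ex
    obtain ⟨y0, hy0m, hy0ne⟩ := hy0ex
    have ha : ⟪x0, x0⟫ ≠ 0 := inner_self_ne_zero.mpr hx0ne
    have hcy : ⟪y0, y0⟫ ≠ 0 := inner_self_ne_zero.mpr hy0ne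
    -- Rstar vanishes on mixed 4-tuples
    have hRsMix : ∀ x ∈ V₁, ∀ y ∈ V₂, Rstar J R x y y x = 0 := by
      intro x hx y hy
      have hjx := hJ1 x hx
      have hjy := hJ2 y hy
      simp only [Rstar]
      rw [hprod x y y x (Or.inl hx) (Or.inr hy) (Or.inr hy) (Or.inl hx) (by tauto) (by tauto),
        hprod x y (J y) (J x) (Or.inl hx) (Or.inr hy) (Or.inr hjy) (Or.inl hjx) (by tauto) (by tauto),
        hprod (J x) (J y) y x (Or.inl hjx) (Or.inr hjy) (Or.inr hy) (Or.inl hx) (by tauto) (by tauto),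
        hprod (J x) (J y) (J y) (J x) (Or.inl hjx) (Or.inr hjy) (Or.inr hjy) (Or.inl hjx) (by tauto) (by tauto),
        hprod (J y) (J y) x x (Or.inr hjy) (Or.inr hjy) (Or.inl hx) (Or.inl hx) (by tauto) (by tauto),
        hprod y y (J x) (J x) (Or.inr hy) (Or.inr hy) (Or.inl hjx) (Or.inl hjx) (by tauto) (by tauto),
        hprod y (J y) (J x) x (Or.inr hy) (Or.inr hjy) (Or.inl hjx) (Or.inl hx) (by tauto) (by tauto),
        hprod x (J y) (J y) x (Or.inl hx) (Or.inr hjy) (Or.inr hjy) (Or.inl hx) (by tauto) (by tauto),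
        hprod (J y) y x (J x) (Or.inr hjy) (Or.inr hy) (Or.inl hx) (Or.inl hjx) (by tauto) (by tauto),
        hprod (J x) y y (J x) (Or.inl hjx) (Or.inr hy) (Or.inr hy) (Or.inl hjx) (by tauto) (by tauto)]
      ring
    -- mixed evaluation
    have hmix : ∀ x ∈ V₁, ∀ y ∈ V₂,
        2 * ((m : ℝ) + 1) * (⟪x, x⟫ * ricStar J b R y y + ⟪y, y⟫ * ricStar J b R x x) =
          scalStar J b R * (⟪x, x⟫ * ⟪y, y⟫) := by
      intro x hx y hy
      have h0 := hz x y y x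
      rw [hRsMix x hx y hy] at h0
      have e1 : ⟪x, y⟫ = (0 : ℝ) := horth x hx y hy
      have e2 : ⟪y, x⟫ = (0 : ℝ) := by rw [real_inner_comm]; exact e1
      have e3 : ⟪x, J y⟫ = (0 : ℝ) := horth x hx (J y) (hJ2 y hy)
      have e4 : ⟪y, J x⟫ = (0 : ℝ) := by
        rw [real_inner_comm]; exact horth (J x) (hJ1 x hx) y hy
      simp only [cphi, cpsi, hgf] at h0
      rw [e1, e2, e3, e4, hxJ, hxJ] at h0
      linear_combination -h0
    -- holomorphic evaluation
    have hFH := FHolo J gf (ricStar J b R) hJJ gfn2 gfh gfx0 gfx0' hQrn2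
    have hFHg := FHolo J gf gf hJJ gfn2 gfh gfx0 gfx0' gfn2
    have hRS6 := RS6 J R hsk1 hsk2 hpair hbia hJJ
    have hholo : ∀ X : V,
        4 * ((m : ℝ) + 1) * ((m : ℝ) + 2) * R X (J X) (J X) X
          - 2 * ((m : ℝ) + 1) *
              (4 * ⟪X, X⟫ * (ricStar J b R X X + ricStar J b R (J X) (J X)))
          + scalStar J b R * (4 * ⟪X, X⟫ ^ 2) = 0 := by
      intro X
      have h0 := hz X (J X) (J X) X
      rw [hRS6 X, hFH X, hFHg X] at h0
      have e5 : gf (J X) (J X) = gf X X := gfh X X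
      rw [e5] at h0
      simp only [hgf] at h0
      linear_combination h0
    -- the constant
    refine ⟨(scalStar J b R * ⟪y0, y0⟫ - 4 * ((m : ℝ) + 1) * ricStar J b R y0 y0) /
      (((m : ℝ) + 1) * ((m : ℝ) + 2) * ⟪y0, y0⟫), ?_, ?_⟩
    · intro X hX
      have h1 := hholo X
      have h2 := hmix X hX y0 hy0m
      have h3 := hmix (J X) (hJ1 X hX) y0 hy0m
      simp only [hJi] at h3
      have hden2 : (((m : ℝ) + 1) * ((m : ℝ) + 2) * ⟪y0, y0⟫) ≠ 0 :=
        mul_ne_zero (mul_ne_zero hm1 hm2) hcy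
      rw [div_mul_eq_mul_div, eq_div_iff hden2]
      linear_combination (⟪y0, y0⟫ / 4) * h1 + ⟪X, X⟫ * h2 + ⟪X, X⟫ * h3
    · intro Y hY
      have h1 := hholo Y
      have h2 := hmix x0 hx0m Y hY
      have h3 := hmix x0 hx0m (J Y) (hJ2 Y hY)
      simp only [hJi] at h3
      have h4 := hmix x0 hx0m y0 hy0m
      have hden2 : (((m : ℝ) + 1) * ((m : ℝ) + 2) * ⟪y0, y0⟫) ≠ 0 :=
        mul_ne_zero (mul_ne_zero hm1 hm2) hcy
      rw [neg_mul, div_mul_eq_mul_div, ← neg_div, eq_div_iff hden2]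
      have key : ((m : ℝ) + 1) * ((m : ℝ) + 2) * R Y (J Y) (J Y) Y * ⟪x0, x0⟫ =
          scalStar J b R * ⟪Y, Y⟫ ^ 2 * ⟪x0, x0⟫
            - 4 * ((m : ℝ) + 1) * ⟪Y, Y⟫ ^ 2 * ricStar J b R x0 x0 := by
        linear_combination (⟪x0, x0⟫ / 4) * h1 + ⟪Y, Y⟫ * h2 + ⟪Y, Y⟫ * h3
      have keyc : (R Y (J Y) (J Y) Y * (((m : ℝ) + 1) * ((m : ℝ) + 2) * ⟪y0, y0⟫)) * ⟪x0, x0⟫ =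
          (-((scalStar J b R * ⟪y0, y0⟫ - 4 * ((m : ℝ) + 1) * ricStar J b R y0 y0) * ⟪Y, Y⟫ ^ 2)) * ⟪x0, x0⟫ := by
        linear_combination ⟪y0, y0⟫ * key - 2 * ⟪Y, Y⟫ ^ 2 * h4
      exact mul_right_cancel₀ ha keyc
  · -- converse direction
    rintro ⟨μ, hμ1, hμ2⟩
    have hRS6 := RS6 J R hsk1 hsk2 hpair hbia hJJ
    -- V₂ is the orthogonal complement of V₁
    have hV2 : V₂ = V₁ᗮ := by
      have hle : V₂ ≤ V₁ᗮ := fun y hy =>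
        (Submodule.mem_orthogonal V₁ y).mpr fun u hu => horth u hu y hy
      refine Submodule.eq_of_le_of_finrank_le hle ?_
      have hsum := Submodule.finrank_add_finrank_orthogonal (K := V₁)
      rw [hd1, hdim] at hsum
      rw [hd2]
      omega
    set P : V →ₗ[ℝ] V :=
      V₁.subtype ∘ₗ (V₁.orthogonalProjectionOnto : V →L[ℝ] V₁).toLinearMap with hPdef
    have hPmem : ∀ v : V, P v ∈ V₁ := fun v => SetLike.coe_mem _
    have hPid : ∀ v ∈ V₁, P v = v := fun v hv => V₁.starProjection_eq_self_iff.mpr hv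
    have hPo : ∀ v : V, v - P v ∈ V₁ᗮ := fun v => V₁.sub_starProjection_mem_orthogonal v
    have hPsa : ∀ u v : V, ⟪P u, v⟫ = ⟪u, P v⟫ := fun u v =>
      V₁.inner_starProjection_left_eq_right u v
    have hP0 : ∀ v ∈ V₁ᗮ, P v = 0 := fun v hv => by
      have h := Submodule.orthogonalProjectionOnto_apply_of_mem_orthogonal hv
      show (V₁.subtype) ((V₁.orthogonalProjectionOnto : V →L[ℝ] V₁).toLinearMap v) = 0
      simp [h]
    have hPP : ∀ v : V, P (P v) = P v := fun v => hPid _ (hPmem v)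
    have horthC : ∀ u ∈ V₁, ∀ w ∈ V₁ᗮ, ⟪u, w⟫ = (0 : ℝ) := fun u hu w hw =>
      (Submodule.mem_orthogonal V₁ w).mp hw u hu
    have hPJ : ∀ v : V, P (J v) = J (P v) := by
      intro v
      have m1 : J (P v) ∈ V₁ := hJ1 _ (hPmem v)
      have m2 : J v - J (P v) ∈ V₁ᗮ := by
        have h2 : v - P v ∈ V₂ := by rw [hV2]; exact hPo v
        have h3 := hJ2 _ h2
        rw [map_sub] at h3
        rw [hV2] at h3
        exact h3
      have hsplit : J v = J (P v) + (J v - J (P v)) := by abel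
      conv_lhs => rw [hsplit]
      rw [map_add, hPid _ m1, hP0 _ m2, add_zero]
    set g1 : V → V → ℝ := fun x y => ⟪P x, y⟫ with hg1
    set g2 : V → V → ℝ := fun x y => ⟪x, y⟫ - g1 x y with hg2
    have g1s : ∀ x y : V, g1 x y = g1 y x := by
      intro x y; simp only [hg1]; rw [hPsa, real_inner_comm]
    have g1w : ∀ a c : V, g1 (J a) c = -g1 a (J c) := by
      intro a c; simp only [hg1]; rw [hPJ, hJw]
    have g1n2 : ∀ a c : V, g1 a (-c) = -g1 a c := by
      intro a c; simp only [hg1]; rw [inner_neg_right]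
    have g1h : ∀ a c : V, g1 (J a) (J c) = g1 a c := by
      intro a c; simp only [hg1]; rw [hPJ, hJi]
    have g1x0 : ∀ x : V, g1 x (J x) = 0 := by
      intro x
      simp only [hg1]
      have m2 : J x - J (P x) ∈ V₁ᗮ := by
        have h2 : x - P x ∈ V₂ := by rw [hV2]; exact hPo x
        have h3 := hJ2 _ h2
        rw [map_sub] at h3
        rw [hV2] at h3
        exact h3
      have hsplit : J x = J (P x) + (J x - J (P x)) := by abel
      rw [hsplit, inner_add_right, hxJ (P x), horthC (P x) (hPmem x) _ m2, add_zero]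
    have g1x0' : ∀ x : V, g1 (J x) x = 0 := by
      intro x; rw [g1w]
      have h := g1x0 x
      rw [h, neg_zero]
    have g2s : ∀ x y : V, g2 x y = g2 y x := by
      intro x y; simp only [hg2]
      linear_combination (real_inner_comm y x) - g1s x y
    have g2w : ∀ a c : V, g2 (J a) c = -g2 a (J c) := by
      intro a c; simp only [hg2]
      linear_combination hJw a c - g1w a c
    have g2n2 : ∀ a c : V, g2 a (-c) = -g2 a c := by
      intro a c; simp only [hg2]
      linear_combination (inner_neg_right a c : ⟪a, -c⟫ = -⟪a, c⟫) - g1n2 a c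
    have g2h : ∀ a c : V, g2 (J a) (J c) = g2 a c := by
      intro a c; simp only [hg2]
      linear_combination hJi a c - g1h a c
    have g2x0 : ∀ x : V, g2 x (J x) = 0 := by
      intro x; simp only [hg2]
      linear_combination hxJ x - g1x0 x
    have g2x0' : ∀ x : V, g2 (J x) x = 0 := by
      intro x; simp only [hg2]
      linear_combination hJx x - g1x0' x
    -- the model tensor
    set Mt : V → V → V → V → ℝ := fun A B C D =>
      (μ / 8) * ((cphi g1 g1 A B C D + cpsi J g1 g1 A B C D) -
        (cphi g2 g2 A B C D + cpsi J g2 g2 A B C D)) with hMt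
    have F1sk1 := Fsk1 J g1 g1 g1s g1w g1s g1w
    have F1sk2 := Fsk2 J g1 g1 g1s g1w g1s g1w
    have F1pair := Fpair J g1 g1 g1s g1w g1s g1w
    have F1bia := Fbia J g1 g1 g1s g1w g1s g1w
    have F1k2 := Fk2 J g1 g1 g1s g1w g1s g1w hJJ g1n2 g1n2
    have F1holo := FHolo J g1 g1 hJJ g1n2 g1h g1x0 g1x0' g1n2
    have F2sk1 := Fsk1 J g2 g2 g2s g2w g2s g2w
    have F2sk2 := Fsk2 J g2 g2 g2s g2w g2s g2w
    have F2pair := Fpair J g2 g2 g2s g2w g2s g2w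
    have F2bia := Fbia J g2 g2 g2s g2w g2s g2w
    have F2k2 := Fk2 J g2 g2 g2s g2w g2s g2w hJJ g2n2 g2n2
    have F2holo := FHolo J g2 g2 hJJ g2n2 g2h g2x0 g2x0' g2n2
    have Msk1 : ∀ A B C D : V, Mt B A C D = -Mt A B C D := by
      intro A B C D; simp only [hMt]
      linear_combination (μ/8) * (F1sk1 A B C D) - (μ/8) * (F2sk1 A B C D)
    have Msk2 : ∀ A B C D : V, Mt A B D C = -Mt A B C D := by
      intro A B C D; simp only [hMt]
      linear_combination (μ/8) * (F1sk2 A B C D) - (μ/8) * (F2sk2 A B C D)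
    have Mpair : ∀ A B C D : V, Mt C D A B = Mt A B C D := by
      intro A B C D; simp only [hMt]
      linear_combination (μ/8) * (F1pair A B C D) - (μ/8) * (F2pair A B C D)
    have Mbia : ∀ A B C D : V, Mt A B C D + Mt B C A D + Mt C A B D = 0 := by
      intro A B C D; simp only [hMt]
      linear_combination (μ/8) * (F1bia A B C D) - (μ/8) * (F2bia A B C D)
    have Mk2 : ∀ A B C D : V, Mt A B (J C) (J D) = Mt A B C D := by
      intro A B C D; simp only [hMt]
      linear_combination (μ/8) * (F1k2 A B C D) - (μ/8) * (F2k2 A B C D)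
    have hMholo : ∀ W : V, Mt W (J W) (J W) W = μ * ((g1 W W)^2 - (g2 W W)^2) := by
      intro W; simp only [hMt]
      rw [F1holo W, F2holo W, g1h, g2h]
      ring
    -- decomposition of the holomorphic curvature
    have hsplitR : ∀ W : V, R W (J W) (J W) W = μ * (g1 W W)^2 - μ * (g2 W W)^2 := by
      intro W
      have hx1 : P W ∈ V₁ := hPmem W
      have hx2 : W - P W ∈ V₂ := by rw [hV2]; exact hPo W
      have hjx1 : J (P W) ∈ V₁ := hJ1 _ hx1
      have hjx2 : J (W - P W) ∈ V₂ := hJ2 _ hx2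
      set a := P W with hadef
      set c := W - P W with hcdef
      have hval : R (a + c) (J a + J c) (J a + J c) (a + c) =
          μ * ⟪a, a⟫ ^ 2 - μ * ⟪c, c⟫ ^ 2 := by
        simp only [map_add, LinearMap.add_apply]
        rw [hprod a (J a) (J a) c (Or.inl hx1) (Or.inl hjx1) (Or.inl hjx1) (Or.inr hx2) (by tauto) (by tauto),
          hprod a (J a) (J c) a (Or.inl hx1) (Or.inl hjx1) (Or.inr hjx2) (Or.inl hx1) (by tauto) (by tauto),
          hprod a (J a) (J c) c (Or.inl hx1) (Or.inl hjx1) (Or.inr hjx2) (Or.inr hx2) (by tauto) (by tauto),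
          hprod a (J c) (J a) a (Or.inl hx1) (Or.inr hjx2) (Or.inl hjx1) (Or.inl hx1) (by tauto) (by tauto),
          hprod a (J c) (J a) c (Or.inl hx1) (Or.inr hjx2) (Or.inl hjx1) (Or.inr hx2) (by tauto) (by tauto),
          hprod a (J c) (J c) a (Or.inl hx1) (Or.inr hjx2) (Or.inr hjx2) (Or.inl hx1) (by tauto) (by tauto),
          hprod a (J c) (J c) c (Or.inl hx1) (Or.inr hjx2) (Or.inr hjx2) (Or.inr hx2) (by tauto) (by tauto),
          hprod c (J a) (J a) a (Or.inr hx2) (Or.inl hjx1) (Or.inl hjx1) (Or.inl hx1) (by tauto) (by tauto),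
          hprod c (J a) (J a) c (Or.inr hx2) (Or.inl hjx1) (Or.inl hjx1) (Or.inr hx2) (by tauto) (by tauto),
          hprod c (J a) (J c) a (Or.inr hx2) (Or.inl hjx1) (Or.inr hjx2) (Or.inl hx1) (by tauto) (by tauto),
          hprod c (J a) (J c) c (Or.inr hx2) (Or.inl hjx1) (Or.inr hjx2) (Or.inr hx2) (by tauto) (by tauto),
          hprod c (J c) (J a) a (Or.inr hx2) (Or.inr hjx2) (Or.inl hjx1) (Or.inl hx1) (by tauto) (by tauto),
          hprod c (J c) (J a) c (Or.inr hx2) (Or.inr hjx2) (Or.inl hjx1) (Or.inr hx2) (by tauto) (by tauto),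
          hprod c (J c) (J c) a (Or.inr hx2) (Or.inr hjx2) (Or.inr hjx2) (Or.inl hx1) (by tauto) (by tauto)]
        rw [hμ1 a hx1, hμ2 c hx2]
        ring
      have hW : a + c = W := by rw [hadef, hcdef]; abel
      have hJsum : J a + J c = J W := by rw [← map_add, hW]
      rw [hW, hJsum] at hval
      rw [hval]
      have e1 : ⟪a, a⟫ = g1 W W := by
        simp only [hg1, hadef]
        rw [hPsa W (P W), hPP, real_inner_comm]
      have e2 : ⟪c, c⟫ = g2 W W := by
        simp only [hg2, hg1, hcdef]
        rw [inner_sub_left, inner_sub_right, inner_sub_right]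
        have e3 : ⟪W, P W⟫ = ⟪P W, W⟫ := real_inner_comm _ _
        have e4 : ⟪P W, P W⟫ = ⟪P W, W⟫ := by rw [hPsa W (P W), hPP, real_inner_comm]
        linear_combination e4 - e3
      rw [e1, e2]
    -- R* equals the model
    have Rsk1i := Rsk1 J R hsk1 hsk2 hpair hbia
    have Rsk2i := Rsk2 J R hsk1 hsk2 hpair hbia
    have Rpairi := Rpair J R hsk1 hsk2 hpair hbia
    have Rbiai := Rbia J R hsk1 hsk2 hpair hbia
    have Rk2i := Rk2 J R hJJ
    have Ra1i := Ra1 J R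
    have Ra2i := Ra2 J R
    have Ra3i := Ra3 J R
    have Ra4i := Ra4 J R
    have Rs1i := Rs1 J R
    have Rs2i := Rs2 J R
    have Rs3i := Rs3 J R
    have Rs4i := Rs4 J R
    have Mlin : ∀ s ∈ ({1} : Set ℕ), True := fun _ _ => trivial
    have Ma1 : ∀ x x' y z u : V, Mt (x + x') y z u = Mt x y z u + Mt x' y z u := by
      intro x x' y z u
      simp only [hMt, cphi, cpsi, hg2, hg1, map_add, inner_add_left, inner_add_right]
      ring
    have Ma2 : ∀ x y y' z u : V, Mt x (y + y') z u = Mt x y z u + Mt x y' z u := by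
      intro x y y' z u
      simp only [hMt, cphi, cpsi, hg2, hg1, map_add, inner_add_left, inner_add_right]
      ring
    have Ma3 : ∀ x y z z' u : V, Mt x y (z + z') u = Mt x y z u + Mt x y z' u := by
      intro x y z z' u
      simp only [hMt, cphi, cpsi, hg2, hg1, map_add, inner_add_left, inner_add_right]
      ring
    have Ma4 : ∀ x y z u u' : V, Mt x y z (u + u') = Mt x y z u + Mt x y z u' := by
      intro x y z u u'
      simp only [hMt, cphi, cpsi, hg2, hg1, map_add, inner_add_left, inner_add_right]
      ring
    have Ms1 : ∀ (r : ℝ) (x y z u : V), Mt (r • x) y z u = r * Mt x y z u := by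
      intro r x y z u
      simp only [hMt, cphi, cpsi, hg2, hg1, map_smul, real_inner_smul_left,
        real_inner_smul_right]
      ring
    have Ms2 : ∀ (r : ℝ) (x y z u : V), Mt x (r • y) z u = r * Mt x y z u := by
      intro r x y z u
      simp only [hMt, cphi, cpsi, hg2, hg1, map_smul, real_inner_smul_left,
        real_inner_smul_right]
      ring
    have Ms3 : ∀ (r : ℝ) (x y z u : V), Mt x y (r • z) u = r * Mt x y z u := by
      intro r x y z u
      simp only [hMt, cphi, cpsi, hg2, hg1, map_smul, real_inner_smul_left,
        real_inner_smul_right]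
      ring
    have Ms4 : ∀ (r : ℝ) (x y z u : V), Mt x y z (r • u) = r * Mt x y z u := by
      intro r x y z u
      simp only [hMt, cphi, cpsi, hg2, hg1, map_smul, real_inner_smul_left,
        real_inner_smul_right]
      ring
    have hRM : ∀ A B C D : V, Rstar J R A B C D = Mt A B C D := by
      have h0 := polar4 J hJJ (fun A B C D => Rstar J R A B C D - Mt A B C D)
        (fun A B C D => by (try simp only []); linear_combination Rsk1i A B C D - Msk1 A B C D)
        (fun A B C D => by (try simp only []); linear_combination Rsk2i A B C D - Msk2 A B C D)
        (fun A B C D => by (try simp only []); linear_combination Rpairi A B C D - Mpair A B C D)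
        (fun A B C D => by (try simp only []); linear_combination Rbiai A B C D - Mbia A B C D)
        (fun A B C D => by (try simp only []); linear_combination Rk2i A B C D - Mk2 A B C D)
        (fun x x' y z u => by (try simp only []); linear_combination Ra1i x x' y z u - Ma1 x x' y z u)
        (fun x y y' z u => by (try simp only []); linear_combination Ra2i x y y' z u - Ma2 x y y' z u)
        (fun x y z z' u => by (try simp only []); linear_combination Ra3i x y z z' u - Ma3 x y z z' u)
        (fun x y z u u' => by (try simp only []); linear_combination Ra4i x y z u u' - Ma4 x y z u u')
        (fun r x y z u => by (try simp only []); linear_combination Rs1i r x y z u - Ms1 r x y z u)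
        (fun r x y z u => by (try simp only []); linear_combination Rs2i r x y z u - Ms2 r x y z u)
        (fun r x y z u => by (try simp only []); linear_combination Rs3i r x y z u - Ms3 r x y z u)
        (fun r x y z u => by (try simp only []); linear_combination Rs4i r x y z u - Ms4 r x y z u)
        (fun W => by
          try simp only []
          rw [hRS6 W, hsplitR W, hMholo W]
          ring)
      intro A B C D
      have h1 := h0 A B C D
      try simp only [] at h1
      linear_combination h1
        -- Parseval facts
    have hpars : ∀ x y : V, ∑ i, ⟪x, b i⟫ * ⟪b i, y⟫ = ⟪x, y⟫ := fun x y =>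
      b.sum_inner_mul_inner x y
    have hbnorm : ∀ i, ⟪b i, b i⟫ = (1 : ℝ) := by
      intro i
      rw [real_inner_self_eq_norm_sq, b.orthonormal.1 i]
      norm_num
    have e4P : ∀ x y : V, ⟪P x, P y⟫ = ⟪P x, y⟫ := by
      intro x y
      rw [hPsa x (P y), hPP, ← hPsa x y]
    have htr2 : ∑ i, ⟪b i, b i⟫ = 2 * (m : ℝ) := by
      rw [Finset.sum_congr rfl fun i _ => hbnorm i]
      simp
    have htr1 : ∑ i, g1 (b i) (b i) = 2 * (k : ℝ) := by
      classical
      set c := stdOrthonormalBasis ℝ V₁ with hcb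
      have e0 : ∀ v : V, ⟪P v, v⟫ = ⟪P v, P v⟫ := by
        intro v
        have h := horthC (P v) (hPmem v) (v - P v) (hPo v)
        rw [inner_sub_right] at h
        linarith
      have key : ∀ i, g1 (b i) (b i) = ∑ j, ⟪(c j : V), b i⟫ * ⟪b i, (c j : V)⟫ := by
        intro i
        simp only [hg1]
        rw [e0 (b i)]
        have h : ⟪P (b i), P (b i)⟫ =
            ∑ j, ⟪P (b i), (c j : V)⟫ * ⟪(c j : V), P (b i)⟫ := by
          have h0 := c.sum_inner_mul_inner (⟨P (b i), hPmem (b i)⟩ : V₁)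
            (⟨P (b i), hPmem (b i)⟩ : V₁)
          exact h0.symm
        rw [h]
        refine Finset.sum_congr rfl fun j _ => ?_
        have e1 : ⟪P (b i), (c j : V)⟫ = ⟪b i, (c j : V)⟫ := by
          rw [hPsa, hPid _ (SetLike.coe_mem (c j))]
        have e2 : ⟪(c j : V), P (b i)⟫ = ⟪b i, (c j : V)⟫ := by
          rw [real_inner_comm, e1]
        rw [e1, e2]
        linear_combination (-⟪b i, (c j : V)⟫) * (real_inner_comm (b i) ((c j : V)))
      rw [Finset.sum_congr rfl fun i _ => key i, Finset.sum_comm]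
      have inner1 : ∀ j, ∑ i, ⟪(c j : V), b i⟫ * ⟪b i, (c j : V)⟫ = (1 : ℝ) := by
        intro j
        rw [hpars]
        have hn : ‖(c j : V)‖ = 1 := c.orthonormal.1 j
        rw [real_inner_self_eq_norm_sq, hn]
        norm_num
      rw [Finset.sum_congr rfl fun j _ => inner1 j]
      simp [hd1]
    have htr1g2 : ∑ i, g2 (b i) (b i) = 2 * ((m:ℝ) - (k:ℝ)) := by
      simp only [hg2]
      rw [Finset.sum_sub_distrib, htr2, htr1]
      ring
    have hB' : ∀ x y : V, ∑ i, ⟪x, b i⟫ * g1 (b i) y = g1 x y := by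
      intro x y
      simp only [hg1]
      have e : ∀ i, ⟪x, b i⟫ * ⟪P (b i), y⟫ = ⟪x, b i⟫ * ⟪b i, P y⟫ := fun i => by
        rw [hPsa]
      rw [Finset.sum_congr rfl fun i _ => e i, hpars, ← hPsa]
    have hC' : ∀ x y : V, ∑ i, g1 x (b i) * ⟪b i, y⟫ = g1 x y := by
      intro x y
      simp only [hg1]
      exact hpars (P x) y
    have hS2g1 : ∀ x y : V, ∑ i, g1 x (b i) * g1 (b i) y = g1 x y := by
      intro x y
      simp only [hg1]
      have e : ∀ i, ⟪P x, b i⟫ * ⟪P (b i), y⟫ = ⟪P x, b i⟫ * ⟪b i, P y⟫ := fun i => by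
        rw [hPsa (b i) y]
      rw [Finset.sum_congr rfl fun i _ => e i, hpars, e4P]
    have hA3 : ∀ x y : V, ∑ i, ⟪x, J (b i)⟫ * ⟪b i, J y⟫ = -⟪x, y⟫ := by
      intro x y
      have e : ∀ i, ⟪x, J (b i)⟫ * ⟪b i, J y⟫ = -(⟪J x, b i⟫ * ⟪b i, J y⟫) := fun i => by
        linear_combination ⟪b i, J y⟫ * hJw x (b i)
      rw [Finset.sum_congr rfl fun i _ => e i, Finset.sum_neg_distrib, hpars, hJi]
    have hB3 : ∀ x y : V, ∑ i, ⟪x, J (b i)⟫ * g1 (b i) (J y) = -g1 x y := by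
      intro x y
      have e : ∀ i, ⟪x, J (b i)⟫ * g1 (b i) (J y) = -(⟪J x, b i⟫ * ⟪b i, J (P y)⟫) := by
        intro i
        simp only [hg1]
        rw [hPsa, hPJ]
        linear_combination ⟪b i, J (P y)⟫ * hJw x (b i)
      rw [Finset.sum_congr rfl fun i _ => e i, Finset.sum_neg_distrib, hpars, hJi]
      simp only [hg1]
      rw [hPsa x y]
    have hC3 : ∀ x y : V, ∑ i, g1 x (J (b i)) * ⟪b i, J y⟫ = -g1 x y := by
      intro x y
      have e : ∀ i, g1 x (J (b i)) * ⟪b i, J y⟫ = -(⟪J (P x), b i⟫ * ⟪b i, J y⟫) := by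
        intro i
        simp only [hg1]
        linear_combination ⟪b i, J y⟫ * hJw (P x) (b i)
      rw [Finset.sum_congr rfl fun i _ => e i, Finset.sum_neg_distrib, hpars, hJi]
    have hS3g1 : ∀ x y : V, ∑ i, g1 x (J (b i)) * g1 (b i) (J y) = -g1 x y := by
      intro x y
      have e : ∀ i, g1 x (J (b i)) * g1 (b i) (J y) =
          -(⟪J (P x), b i⟫ * ⟪b i, J (P y)⟫) := by
        intro i
        simp only [hg1]
        rw [hPsa (b i) (J y), hPJ y]
        linear_combination ⟪b i, J (P y)⟫ * hJw (P x) (b i)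
      rw [Finset.sum_congr rfl fun i _ => e i, Finset.sum_neg_distrib, hpars, hJi, e4P]
    have hS2g2 : ∀ x y : V, ∑ i, g2 x (b i) * g2 (b i) y = g2 x y := by
      intro x y
      have expand : ∀ i, g2 x (b i) * g2 (b i) y =
          ⟪x, b i⟫ * ⟪b i, y⟫ - ⟪x, b i⟫ * g1 (b i) y - g1 x (b i) * ⟪b i, y⟫ +
            g1 x (b i) * g1 (b i) y := fun i => by simp only [hg2]; ring
      rw [Finset.sum_congr rfl fun i _ => expand i, Finset.sum_add_distrib,
        Finset.sum_sub_distrib, Finset.sum_sub_distrib, hpars, hB' x y, hC' x y, hS2g1 x y]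
      simp only [hg2]
      ring
    have hS3g2 : ∀ x y : V, ∑ i, g2 x (J (b i)) * g2 (b i) (J y) = -g2 x y := by
      intro x y
      have expand : ∀ i, g2 x (J (b i)) * g2 (b i) (J y) =
          ⟪x, J (b i)⟫ * ⟪b i, J y⟫ - ⟪x, J (b i)⟫ * g1 (b i) (J y) -
            g1 x (J (b i)) * ⟪b i, J y⟫ + g1 x (J (b i)) * g1 (b i) (J y) := fun i => by
        simp only [hg2]; ring
      rw [Finset.sum_congr rfl fun i _ => expand i, Finset.sum_add_distrib,
        Finset.sum_sub_distrib, Finset.sum_sub_distrib, hA3 x y, hB3 x y, hC3 x y, hS3g1 x y]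
      simp only [hg2]
      ring
    -- closed form of the *-Ricci tensor
    have hsum1 : ∀ x y : V,
        ∑ i, (cphi g1 g1 x (b i) (b i) y + cpsi J g1 g1 x (b i) (b i) y) =
          (2 * (2 * (k:ℝ)) + 4) * g1 x y := by
      intro x y
      have expand : ∀ i, cphi g1 g1 x (b i) (b i) y + cpsi J g1 g1 x (b i) (b i) y =
          (2 * g1 x y) * g1 (b i) (b i) - 2 * (g1 x (b i) * g1 (b i) y) -
            6 * (g1 x (J (b i)) * g1 (b i) (J y)) := by
        intro i
        simp only [cphi, cpsi]
        rw [g1x0 (b i)]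
        ring
      rw [Finset.sum_congr rfl fun i _ => expand i, Finset.sum_sub_distrib,
        Finset.sum_sub_distrib, ← Finset.mul_sum, ← Finset.mul_sum, ← Finset.mul_sum,
        htr1, hS2g1, hS3g1]
      ring
    have hsum2 : ∀ x y : V,
        ∑ i, (cphi g2 g2 x (b i) (b i) y + cpsi J g2 g2 x (b i) (b i) y) =
          (2 * (2 * ((m:ℝ) - (k:ℝ))) + 4) * g2 x y := by
      intro x y
      have expand : ∀ i, cphi g2 g2 x (b i) (b i) y + cpsi J g2 g2 x (b i) (b i) y =
          (2 * g2 x y) * g2 (b i) (b i) - 2 * (g2 x (b i) * g2 (b i) y) -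
            6 * (g2 x (J (b i)) * g2 (b i) (J y)) := by
        intro i
        simp only [cphi, cpsi]
        rw [g2x0 (b i)]
        ring
      rw [Finset.sum_congr rfl fun i _ => expand i, Finset.sum_sub_distrib,
        Finset.sum_sub_distrib, ← Finset.mul_sum, ← Finset.mul_sum, ← Finset.mul_sum,
        htr1g2, hS2g2, hS3g2]
      ring
    have hric : ∀ x y : V, ricStar J b R x y =
        (μ/2) * (((k:ℝ)+1) * g1 x y - (((m:ℝ)-(k:ℝ))+1) * g2 x y) := by
      intro x y
      have h1 : ricStar J b R x y = ∑ i, Mt x (b i) (b i) y := by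
        simp only [ricStar]
        exact Finset.sum_congr rfl fun i _ => hRM x (b i) (b i) y
      have h2 : ∀ i, Mt x (b i) (b i) y = (μ/8) *
          ((cphi g1 g1 x (b i) (b i) y + cpsi J g1 g1 x (b i) (b i) y) -
            (cphi g2 g2 x (b i) (b i) y + cpsi J g2 g2 x (b i) (b i) y)) := fun i => by
        simp only [hMt]
      rw [h1, Finset.sum_congr rfl fun i _ => h2 i, ← Finset.mul_sum,
        Finset.sum_sub_distrib, hsum1 x y, hsum2 x y]
      ring
    have hscal : scalStar J b R = (μ/2) * (((k:ℝ)+1) * (2*(k:ℝ)) -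
        (((m:ℝ)-(k:ℝ))+1) * (2*((m:ℝ)-(k:ℝ)))) := by
      simp only [scalStar]
      rw [Finset.sum_congr rfl fun i _ => hric (b i) (b i), ← Finset.mul_sum,
        Finset.sum_sub_distrib, ← Finset.mul_sum, ← Finset.mul_sum, htr1, htr1g2]
    -- symmetry rules for the *-Ricci tensor
    have Qrs : ∀ a c : V, ricStar J b R a c = ricStar J b R c a := by
      intro a c; rw [hric, hric]
      linear_combination (μ/2) * ((k:ℝ)+1) * g1s a c -
        (μ/2) * (((m:ℝ)-(k:ℝ))+1) * g2s a c
    have Qrw : ∀ a c : V, ricStar J b R (J a) c = -ricStar J b R a (J c) := by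
      intro a c; rw [hric, hric]
      linear_combination (μ/2) * ((k:ℝ)+1) * g1w a c -
        (μ/2) * (((m:ℝ)-(k:ℝ))+1) * g2w a c
    have Qra1 : ∀ x x' y : V, ricStar J b R (x + x') y =
        ricStar J b R x y + ricStar J b R x' y := by
      intro x x' y
      simp only [ricStar]
      rw [← Finset.sum_add_distrib]
      exact Finset.sum_congr rfl fun i _ => Ra1i x x' (b i) (b i) y
    have Qra2 : ∀ x y y' : V, ricStar J b R x (y + y') =
        ricStar J b R x y + ricStar J b R x y' := by
      intro x y y'
      simp only [ricStar]
      rw [← Finset.sum_add_distrib]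
      exact Finset.sum_congr rfl fun i _ => Ra4i x (b i) (b i) y y'
    have Qrm1 : ∀ (r : ℝ) (x y : V), ricStar J b R (r • x) y = r * ricStar J b R x y := by
      intro r x y
      simp only [ricStar]
      rw [Finset.mul_sum]
      exact Finset.sum_congr rfl fun i _ => Rs1i r x (b i) (b i) y
    have Qrm2 : ∀ (r : ℝ) (x y : V), ricStar J b R x (r • y) = r * ricStar J b R x y := by
      intro r x y
      simp only [ricStar]
      rw [Finset.mul_sum]
      exact Finset.sum_congr rfl fun i _ => Rs4i r x (b i) (b i) y
    -- KL-packages for the ambient inner product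
    have FQsk1 := Fsk1 J gf (ricStar J b R) gfs gfw Qrs Qrw
    have FQsk2 := Fsk2 J gf (ricStar J b R) gfs gfw Qrs Qrw
    have FQpair := Fpair J gf (ricStar J b R) gfs gfw Qrs Qrw
    have FQbia := Fbia J gf (ricStar J b R) gfs gfw Qrs Qrw
    have FQk2 := Fk2 J gf (ricStar J b R) gfs gfw Qrs Qrw hJJ gfn2 hQrn2
    have FQholo := FHolo J gf (ricStar J b R) hJJ gfn2 gfh gfx0 gfx0' hQrn2
    have FGsk1 := Fsk1 J gf gf gfs gfw gfs gfw
    have FGsk2 := Fsk2 J gf gf gfs gfw gfs gfw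
    have FGpair := Fpair J gf gf gfs gfw gfs gfw
    have FGbia := Fbia J gf gf gfs gfw gfs gfw
    have FGk2 := Fk2 J gf gf gfs gfw gfs gfw hJJ gfn2 gfn2
    have FGholo := FHolo J gf gf hJJ gfn2 gfh gfx0 gfx0' gfn2
    -- the numerator tensor vanishes, via the polarization lemma
    have hzB := polar4 J hJJ (fun A B C D =>
        4 * ((m:ℝ)+1) * ((m:ℝ)+2) * Rstar J R A B C D
          - 2 * ((m:ℝ)+1) * (cphi gf (ricStar J b R) A B C D + cpsi J gf (ricStar J b R) A B C D)
          + scalStar J b R * ((1/2) * (cphi gf gf A B C D + cpsi J gf gf A B C D)))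
      (fun A B C D => by
        try simp only []
        linear_combination 4 * ((m:ℝ)+1) * ((m:ℝ)+2) * Rsk1i A B C D -
          2 * ((m:ℝ)+1) * FQsk1 A B C D + scalStar J b R * (1/2) * FGsk1 A B C D)
      (fun A B C D => by
        try simp only []
        linear_combination 4 * ((m:ℝ)+1) * ((m:ℝ)+2) * Rsk2i A B C D -
          2 * ((m:ℝ)+1) * FQsk2 A B C D + scalStar J b R * (1/2) * FGsk2 A B C D)
      (fun A B C D => by
        try simp only []
        linear_combination 4 * ((m:ℝ)+1) * ((m:ℝ)+2) * Rpairi A B C D -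
          2 * ((m:ℝ)+1) * FQpair A B C D + scalStar J b R * (1/2) * FGpair A B C D)
      (fun A B C D => by
        try simp only []
        linear_combination 4 * ((m:ℝ)+1) * ((m:ℝ)+2) * Rbiai A B C D -
          2 * ((m:ℝ)+1) * FQbia A B C D + scalStar J b R * (1/2) * FGbia A B C D)
      (fun A B C D => by
        try simp only []
        linear_combination 4 * ((m:ℝ)+1) * ((m:ℝ)+2) * Rk2i A B C D -
          2 * ((m:ℝ)+1) * FQk2 A B C D + scalStar J b R * (1/2) * FGk2 A B C D)
      (fun x x' y z u => by
        simp only [cphi, cpsi, hgf, map_add, inner_add_left, inner_add_right,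
          Qra1, Qra2, Ra1i, Ra2i, Ra3i, Ra4i]
        ring)
      (fun x y y' z u => by
        simp only [cphi, cpsi, hgf, map_add, inner_add_left, inner_add_right,
          Qra1, Qra2, Ra1i, Ra2i, Ra3i, Ra4i]
        ring)
      (fun x y z z' u => by
        simp only [cphi, cpsi, hgf, map_add, inner_add_left, inner_add_right,
          Qra1, Qra2, Ra1i, Ra2i, Ra3i, Ra4i]
        ring)
      (fun x y z u u' => by
        simp only [cphi, cpsi, hgf, map_add, inner_add_left, inner_add_right,
          Qra1, Qra2, Ra1i, Ra2i, Ra3i, Ra4i]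
        ring)
      (fun r x y z u => by
        simp only [cphi, cpsi, hgf, map_smul, real_inner_smul_left, real_inner_smul_right,
          Qrm1, Qrm2, Rs1i, Rs2i, Rs3i, Rs4i]
        ring)
      (fun r x y z u => by
        simp only [cphi, cpsi, hgf, map_smul, real_inner_smul_left, real_inner_smul_right,
          Qrm1, Qrm2, Rs1i, Rs2i, Rs3i, Rs4i]
        ring)
      (fun r x y z u => by
        simp only [cphi, cpsi, hgf, map_smul, real_inner_smul_left, real_inner_smul_right,
          Qrm1, Qrm2, Rs1i, Rs2i, Rs3i, Rs4i]
        ring)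
      (fun r x y z u => by
        simp only [cphi, cpsi, hgf, map_smul, real_inner_smul_left, real_inner_smul_right,
          Qrm1, Qrm2, Rs1i, Rs2i, Rs3i, Rs4i]
        ring)
      (fun W => by
        try simp only []
        rw [hRM W (J W) (J W) W, hMholo W, FQholo W, FGholo W, hric W W,
          hric (J W) (J W), g1h, g2h, hscal, gfh W W]
        simp only [hg2, hgf]
        ring)
    intro X Y Z U
    have h0 : 4 * ((m:ℝ)+1) * ((m:ℝ)+2) * Rstar J R X Y Z U
        - 2 * ((m:ℝ)+1) * (cphi gf (ricStar J b R) X Y Z U + cpsi J gf (ricStar J b R) X Y Z U)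
        + scalStar J b R * ((1/2) * (cphi gf gf X Y Z U + cpsi J gf gf X Y Z U)) = 0 :=
      hzB X Y Z U
    rw [hbridge, h0, zero_div]
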